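/- Let G be a connected simple graph (possibly infinite), let uv be an edge of G, and let G' be obtained from G by removing the edge uv, where G' is assumed connected. If W is a resolving set of G, then W ∪ {u, v} is a resolving set of G'. -/
import Mathlib


/-- `W` is a resolving set of `G`. -/
def IsResolving {V : Type*} (G : SimpleGraph V) (W : Set V) : Prop :=
  ∀ x y : V, x ≠ y → ∃ w ∈ W, G.dist w x ≠ G.dist w y

open SimpleGraph in
private lemma walk_bound {V : Type*} {G : SimpleGraph V} {u v : V} (hne : u ≠ v)
    (hconn : (G.deleteEdges {s(u, v)}).Connected) :
    ∀ {a b : V} (p : G.Walk a b),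
      (G.deleteEdges {s(u, v)}).dist a b ≤ p.length ∨
      (G.deleteEdges {s(u, v)}).dist a u + 1 + (G.deleteEdges {s(u, v)}).dist v b ≤ p.length ∨
      (G.deleteEdges {s(u, v)}).dist a v + 1 + (G.deleteEdges {s(u, v)}).dist u b ≤ p.length := by
  set G' := G.deleteEdges {s(u, v)} with hG'
  intro a b p
  induction p with
  | nil => left; simp
  | @cons a c b h q ih =>
    rw [SimpleGraph.Walk.length_cons]
    by_cases he : s(a, c) = s(u, v)
    · rw [Sym2.eq_iff] at he
      rcases he with ⟨rfl, rfl⟩ | ⟨rfl, rfl⟩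
      · -- a = u, c = v
        rcases ih with h1 | h2 | h3
        · right; left
          have : G'.dist a a = 0 := SimpleGraph.dist_self
          omega
        · right; left
          have hp : 0 < G'.dist c a := hconn.pos_dist_of_ne hne.symm
          have : G'.dist a a = 0 := SimpleGraph.dist_self
          omega
        · left
          have : G'.dist c c = 0 := SimpleGraph.dist_self
          omega
      · -- a = v, c = u
        rcases ih with h1 | h2 | h3
        · right; right
          have : G'.dist a a = 0 := SimpleGraph.dist_self
          omega
        · left
          have : G'.dist c c = 0 := SimpleGraph.dist_self
          omega
        · right; right
          have hp : 0 < G'.dist c a := hconn.pos_dist_of_ne hne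
          have : G'.dist a a = 0 := SimpleGraph.dist_self
          omega
    · have hadj' : G'.Adj a c := by
        rw [hG', SimpleGraph.deleteEdges_adj]
        exact ⟨h, by simpa using he⟩
      have hd1 : G'.dist a c = 1 := SimpleGraph.dist_eq_one_iff_adj.mpr hadj'
      rcases ih with h1 | h2 | h3
      · left
        have := hconn.dist_triangle (u := a) (v := c) (w := b)
        omega
      · right; left
        have := hconn.dist_triangle (u := a) (v := c) (w := u)
        omega
      · right; right
        have := hconn.dist_triangle (u := a) (v := c) (w := v)
        omega

open SimpleGraph in
private lemma dist_deleteEdge_formula {V : Type*} {G : SimpleGraph V} (hG : G.Connected)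
    {u v : V} (hadj : G.Adj u v)
    (hconn : (G.deleteEdges {s(u, v)}).Connected) (a b : V) :
    G.dist a b = min ((G.deleteEdges {s(u, v)}).dist a b)
      (min ((G.deleteEdges {s(u, v)}).dist a u + 1 + (G.deleteEdges {s(u, v)}).dist v b)
        ((G.deleteEdges {s(u, v)}).dist a v + 1 + (G.deleteEdges {s(u, v)}).dist u b)) := by
  set G' := G.deleteEdges {s(u, v)} with hG'
  have hle : ∀ x y : V, G.dist x y ≤ G'.dist x y := fun x y =>
    (hconn x y).dist_anti (SimpleGraph.deleteEdges_le _)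
  have huv : G.dist u v = 1 := SimpleGraph.dist_eq_one_iff_adj.mpr hadj
  apply le_antisymm
  · refine le_min (hle a b) (le_min ?_ ?_)
    · calc G.dist a b ≤ G.dist a u + G.dist u b := hG.dist_triangle
        _ ≤ G.dist a u + (G.dist u v + G.dist v b) := by
            have := hG.dist_triangle (u := u) (v := v) (w := b); omega
        _ ≤ G'.dist a u + 1 + G'.dist v b := by
            have := hle a u; have := hle v b; omega
    · calc G.dist a b ≤ G.dist a v + G.dist v b := hG.dist_triangle
        _ ≤ G.dist a v + (G.dist v u + G.dist u b) := by
            have := hG.dist_triangle (u := v) (v := u) (w := b); omega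
        _ ≤ G'.dist a v + 1 + G'.dist u b := by
            have h1 := hle a v; have h2 := hle u b
            have : G.dist v u = 1 := SimpleGraph.dist_comm ▸ huv
            omega
  · obtain ⟨p, hp⟩ := hG.exists_walk_length_eq_dist a b
    rcases walk_bound hadj.ne hconn p with h1 | h2 | h3
    · exact le_trans (min_le_left _ _) (hp ▸ h1)
    · exact le_trans (le_trans (min_le_right _ _) (min_le_left _ _)) (hp ▸ h2)
    · exact le_trans (le_trans (min_le_right _ _) (min_le_right _ _)) (hp ▸ h3)

/-- Edge removal: let `G` be connected, `uv` an edge of `G`, and let `G'` be `G` with the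
edge `uv` removed, assumed connected.  If `W` is a resolving set of `G`, then
`W ∪ {u, v}` is a resolving set of `G'`. -/
theorem resolvingSet_deleteEdge {V : Type*} (G : SimpleGraph V) (hG : G.Connected)
    (u v : V) (hadj : G.Adj u v)
    (hconn : (G.deleteEdges {s(u, v)}).Connected)
    (W : Set V) (hW : IsResolving G W) :
    IsResolving (G.deleteEdges {s(u, v)}) (W ∪ {u, v}) := by
  set G' := G.deleteEdges {s(u, v)} with hG'
  intro x y hxy
  by_cases hu : G'.dist u x ≠ G'.dist u y
  · exact ⟨u, Or.inr (by simp), hu⟩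
  by_cases hv : G'.dist v x ≠ G'.dist v y
  · exact ⟨v, Or.inr (by simp), hv⟩
  push_neg at hu hv
  obtain ⟨w, hwW, hw⟩ := hW x y hxy
  refine ⟨w, Or.inl hwW, fun hcontra => hw ?_⟩
  have hx := dist_deleteEdge_formula hG hadj hconn w x
  have hy := dist_deleteEdge_formula hG hadj hconn w y
  rw [hx, hy, hcontra]
  rw [hu, hv]
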